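/- Let h_sd, λ_p, λ_s, μ_p be real numbers with λ_p ≠ μ_p and λ_s ≠ 0, and let b be a real number with λ_s·μ_p·(μ_p − λ_p) ≠ h_sd·(μ_p − λ_p)²·b. Then the function D_s(b) = N_s(b)/λ_s has derivative at b equal to −h_sd·μ_p·(λ_p·λ_s²·(1−μ_p)·(μ_p−λ_p) + (λ_s − λ_s²)·(μ_p−λ_p)³) / (λ_s·(λ_s·μ_p·(μ_p−λ_p) − h_sd·(μ_p−λ_p)²·b)²). -/

import Mathlib

/-- Derivative formula (14) of the paper: under `λ_p ≠ μ_p`, `λ_s ≠ 0`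
and `λ_s·μ_p·(μ_p − λ_p) ≠ h_sd·(μ_p − λ_p)²·b`, the secondary delay `D_s` has
derivative at `b` equal to
`−h_sd·μ_p·(λ_p·λ_s²·(1−μ_p)·(μ_p−λ_p) + (λ_s − λ_s²)·(μ_p−λ_p)³)
  / (λ_s·(λ_s·μ_p·(μ_p−λ_p) − h_sd·(μ_p−λ_p)²·b)²)`. -/
theorem secondary_delay_hasDerivAt
    (h_sd lam_p lam_s mu_p : ℝ)
    (hne : lam_p ≠ mu_p) (hls : lam_s ≠ 0)
    (b : ℝ)
    (hden : lam_s * mu_p * (mu_p - lam_p) ≠ h_sd * (mu_p - lam_p) ^ 2 * b)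
    (N_s : ℝ → ℝ)
    (hNs : ∀ x : ℝ, N_s x =
      (x * h_sd * lam_p * lam_s * (1 - mu_p)
        + (lam_s - lam_s ^ 2) * (mu_p - lam_p) * mu_p)
      / ((mu_p - lam_p) * (x * h_sd * (mu_p - lam_p) - lam_s * mu_p)))
    (D_s : ℝ → ℝ)
    (hDs : ∀ x : ℝ, D_s x = N_s x / lam_s) :
    HasDerivAt D_s
      (-h_sd * mu_p *
        (lam_p * lam_s ^ 2 * (1 - mu_p) * (mu_p - lam_p)
          + (lam_s - lam_s ^ 2) * (mu_p - lam_p) ^ 3)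
        / (lam_s * (lam_s * mu_p * (mu_p - lam_p) - h_sd * (mu_p - lam_p) ^ 2 * b) ^ 2))
      b := by
  have hd0 : (mu_p - lam_p) * (b * h_sd * (mu_p - lam_p) - lam_s * mu_p) ≠ 0 := by
    intro h
    apply hden
    linear_combination -h
  have h4 : lam_s * mu_p * (mu_p - lam_p) - h_sd * (mu_p - lam_p) ^ 2 * b ≠ 0 :=
    sub_ne_zero.mpr hden
  have hfun : D_s = fun x =>
      ((x * h_sd * lam_p * lam_s * (1 - mu_p)
        + (lam_s - lam_s ^ 2) * (mu_p - lam_p) * mu_p)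
      / ((mu_p - lam_p) * (x * h_sd * (mu_p - lam_p) - lam_s * mu_p))) / lam_s := by
    funext x; rw [hDs, hNs]
  rw [hfun]
  have h1 : HasDerivAt (fun x : ℝ => x * h_sd * lam_p * lam_s * (1 - mu_p)
      + (lam_s - lam_s ^ 2) * (mu_p - lam_p) * mu_p)
      (h_sd * lam_p * lam_s * (1 - mu_p)) b := by
    simpa using
      (((((hasDerivAt_id b).mul_const h_sd).mul_const lam_p).mul_const lam_s).mul_const
        (1 - mu_p)).add_const ((lam_s - lam_s ^ 2) * (mu_p - lam_p) * mu_p)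
  have h2 : HasDerivAt (fun x : ℝ => (mu_p - lam_p) * (x * h_sd * (mu_p - lam_p) - lam_s * mu_p))
      ((mu_p - lam_p) * (h_sd * (mu_p - lam_p))) b := by
    have := ((((hasDerivAt_id b).mul_const h_sd).mul_const (mu_p - lam_p)).sub_const
      (lam_s * mu_p)).const_mul (mu_p - lam_p)
    simpa using this
  have h3 := (h1.div h2 hd0).div_const lam_s
  refine h3.congr_deriv ?_
  field_simp
  ring
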